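/- Let ΔABC be a Euclidean triangle with side lengths a, b, c whose angles are all at least ε > 0, and let δ < ε²/48. If a', b', c' satisfy |a' - a| ≤ δa, |b' - b| ≤ δb, |c' - c| ≤ δc, then the angle A' opposite a' in the triangle with sides a', b', c' satisfies |A' - A| ≤ (24/ε)δ. -/

import Mathlib

open Real

set_option maxHeartbeats 4000000

private lemma pta_abs_mul_le {u v U V : ℝ} (hu : |u| ≤ U) (hv : |v| ≤ V) : |u * v| ≤ U * V := by
  rw [abs_mul]
  exact mul_le_mul hu hv (abs_nonneg v) ((abs_nonneg u).trans hu)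

/-- midpoint sine bound: `sin A / 2 ≤ sin ((A+A')/2)` for `A, A' ∈ [0, π]`. -/
private lemma pta_sin_mid {A A' : ℝ} (hA0 : 0 ≤ A) (hAπ : A ≤ π)
    (hA'0 : 0 ≤ A') (hA'π : A' ≤ π) :
    Real.sin A / 2 ≤ Real.sin ((A + A') / 2) := by
  have hpi := Real.pi_pos
  have h1 : Real.sin ((A + A') / 2)
      = Real.sin (A/2) * Real.cos (A'/2) + Real.cos (A/2) * Real.sin (A'/2) := by
    rw [show (A + A')/2 = A/2 + A'/2 by ring, Real.sin_add]
  have h2 : Real.sin A = 2 * Real.sin (A/2) * Real.cos (A/2) := by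
    rw [show A = 2*(A/2) by ring, Real.sin_two_mul]
    ring_nf
  have hs : 0 ≤ Real.sin (A/2) := Real.sin_nonneg_of_nonneg_of_le_pi (by linarith) (by linarith)
  have hs' : 0 ≤ Real.sin (A'/2) := Real.sin_nonneg_of_nonneg_of_le_pi (by linarith) (by linarith)
  have hcπ : 0 ≤ Real.cos (A/2) := Real.cos_nonneg_of_mem_Icc ⟨by linarith, by linarith⟩
  have hc' : 0 ≤ Real.cos (A'/2) := Real.cos_nonneg_of_mem_Icc ⟨by linarith, by linarith⟩
  rcases le_total A' A with h | h
  · have hcc : Real.cos (A/2) ≤ Real.cos (A'/2) :=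
      Real.cos_le_cos_of_nonneg_of_le_pi (by linarith) (by linarith) (by linarith)
    nlinarith
  · have hss : Real.sin (A/2) ≤ Real.sin (A'/2) :=
      Real.sin_le_sin_of_le_of_le_pi_div_two (by linarith) (by linarith) (by linarith)
    nlinarith

/-- Quantitative continuity of `arccos`:
`√(1-u²) · |arccos v - arccos u| ≤ π · |v - u|`. -/
private lemma pta_arccos_diff {u v : ℝ} (hu1 : -1 ≤ u) (hu2 : u ≤ 1)
    (hv1 : -1 ≤ v) (hv2 : v ≤ 1) :
    Real.sqrt (1 - u^2) * |Real.arccos v - Real.arccos u| ≤ π * |v - u| := by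
  have hpi := Real.pi_pos
  set A := Real.arccos u with hA
  set A' := Real.arccos v with hA'
  have hA0 : 0 ≤ A := Real.arccos_nonneg u
  have hAπ : A ≤ π := Real.arccos_le_pi u
  have hA'0 : 0 ≤ A' := Real.arccos_nonneg v
  have hA'π : A' ≤ π := Real.arccos_le_pi v
  have hmid0 : 0 ≤ Real.sin ((A' + A)/2) :=
    Real.sin_nonneg_of_nonneg_of_le_pi (by linarith) (by linarith)
  have hcos : v - u = Real.cos A' - Real.cos A := by
    rw [hA, hA', Real.cos_arccos hu1 hu2, Real.cos_arccos hv1 hv2]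
  have habs : |v - u| = 2 * Real.sin ((A' + A)/2) * |Real.sin ((A' - A)/2)| := by
    rw [hcos, Real.cos_sub_cos, abs_mul, abs_mul]
    rw [abs_of_nonneg hmid0]
    norm_num
  have hsinA : Real.sin A = Real.sqrt (1 - u^2) := by
    rw [hA, Real.sin_arccos]
  have hmid : Real.sin A / 2 ≤ Real.sin ((A' + A)/2) := by
    rw [show A' + A = A + A' by ring]
    exact pta_sin_mid hA0 hAπ hA'0 hA'π
  have hhalf : |A' - A| ≤ π * |Real.sin ((A' - A)/2)| := by
    have habs2 : |(A' - A)/2| = |A' - A|/2 := by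
      rw [abs_div]; norm_num
    have hd : |A' - A| ≤ π := abs_le.2 ⟨by linarith, by linarith⟩
    have h := Real.mul_abs_le_abs_sin (x := (A' - A)/2) (by rw [habs2]; linarith)
    rw [habs2] at h
    have heq : 2/π * (|A' - A|/2) = |A' - A|/π := by ring
    rw [heq] at h
    rwa [div_le_iff₀ hpi, mul_comm] at h
  have hsA0 : 0 ≤ Real.sin A := Real.sin_nonneg_of_nonneg_of_le_pi hA0 hAπ
  calc Real.sqrt (1 - u^2) * |A' - A| = Real.sin A * |A' - A| := by rw [hsinA]
    _ ≤ Real.sin A * (π * |Real.sin ((A' - A)/2)|) :=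
        mul_le_mul_of_nonneg_left hhalf hsA0
    _ = π * (Real.sin A * |Real.sin ((A' - A)/2)|) := by ring
    _ ≤ π * ((2 * Real.sin ((A' + A)/2)) * |Real.sin ((A' - A)/2)|) := by
        have h2 : Real.sin A ≤ 2 * Real.sin ((A' + A)/2) := by linarith
        have h3 : Real.sin A * |Real.sin ((A' - A)/2)|
            ≤ (2 * Real.sin ((A' + A)/2)) * |Real.sin ((A' - A)/2)| :=
          mul_le_mul_of_nonneg_right h2 (abs_nonneg _)
        exact mul_le_mul_of_nonneg_left h3 hpi.le
    _ = π * |v - u| := by rw [habs]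

/-- If all the angles of the Euclidean triangle with side lengths `a, b, c` are at least
`ε > 0`, `δ < ε²/48`, and `|a'-a| ≤ δa`, `|b'-b| ≤ δb`, `|c'-c| ≤ δc`, then the angle `A'`
opposite `a'` satisfies `|A' - A| ≤ (24/ε)δ`. -/
theorem perturbed_triangle_angle_estimate (a b c a' b' c' ε δ : ℝ)
    (ha : 0 < a) (hb : 0 < b) (hc : 0 < c)
    (ha' : 0 < a') (hb' : 0 < b') (hc' : 0 < c')
    (htri1 : a < b + c) (htri2 : b < a + c) (htri3 : c < a + b)
    (hε : 0 < ε)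
    (hA : Real.arccos ((b ^ 2 + c ^ 2 - a ^ 2) / (2 * b * c)) ≥ ε)
    (hB : Real.arccos ((a ^ 2 + c ^ 2 - b ^ 2) / (2 * a * c)) ≥ ε)
    (hC : Real.arccos ((a ^ 2 + b ^ 2 - c ^ 2) / (2 * a * b)) ≥ ε)
    (hδ : δ < ε ^ 2 / 48)
    (hpa : |a' - a| ≤ δ * a) (hpb : |b' - b| ≤ δ * b) (hpc : |c' - c| ≤ δ * c) :
    |Real.arccos ((b' ^ 2 + c' ^ 2 - a' ^ 2) / (2 * b' * c'))
        - Real.arccos ((b ^ 2 + c ^ 2 - a ^ 2) / (2 * b * c))| ≤ 24 / ε * δ := by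
  have hpi := Real.pi_pos
  have hπu : π < 3.1416 := Real.pi_lt_d4
  have hπl : (3.1415 : ℝ) < π := Real.pi_gt_d4
  have hπsq : π ^ 2 ≤ 9.86966 := by nlinarith only [hπu, hπl]
  set x := (b ^ 2 + c ^ 2 - a ^ 2) / (2 * b * c) with hxdef
  set x' := (b' ^ 2 + c' ^ 2 - a' ^ 2) / (2 * b' * c') with hx'def
  have hbc : (0:ℝ) < 2 * b * c := by positivity
  have hac : (0:ℝ) < 2 * a * c := by positivity
  have hab : (0:ℝ) < 2 * a * b := by positivity
  have hbc' : (0:ℝ) < 2 * b' * c' := by positivity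
  -- basic bounds on the three cosines
  have hx_lt : x < 1 := by
    rw [hxdef, div_lt_one hbc]
    nlinarith only [mul_pos (show (0:ℝ) < a - b + c by linarith)
      (show (0:ℝ) < a + b - c by linarith)]
  have hx_gt : (-1:ℝ) < x := by
    rw [hxdef, lt_div_iff₀ hbc]
    nlinarith only [mul_pos (show (0:ℝ) < b + c - a by linarith)
      (show (0:ℝ) < a + b + c by linarith)]
  have hy_lt : (a ^ 2 + c ^ 2 - b ^ 2) / (2 * a * c) < 1 := by
    rw [div_lt_one hac]
    nlinarith only [mul_pos (show (0:ℝ) < b - a + c by linarith)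
      (show (0:ℝ) < a + b - c by linarith)]
  have hy_gt : (-1:ℝ) < (a ^ 2 + c ^ 2 - b ^ 2) / (2 * a * c) := by
    rw [lt_div_iff₀ hac]
    nlinarith only [mul_pos (show (0:ℝ) < a + c - b by linarith)
      (show (0:ℝ) < a + b + c by linarith)]
  have hz_lt : (a ^ 2 + b ^ 2 - c ^ 2) / (2 * a * b) < 1 := by
    rw [div_lt_one hab]
    nlinarith only [mul_pos (show (0:ℝ) < c - a + b by linarith)
      (show (0:ℝ) < a - b + c by linarith)]
  have hz_gt : (-1:ℝ) < (a ^ 2 + b ^ 2 - c ^ 2) / (2 * a * b) := by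
    rw [lt_div_iff₀ hab]
    nlinarith only [mul_pos (show (0:ℝ) < a + b - c by linarith)
      (show (0:ℝ) < a + b + c by linarith)]
  have hεπ : ε ≤ π := le_trans hA (Real.arccos_le_pi _)
  -- the three cosines are at most cos ε
  have hxk : x ≤ Real.cos ε := by
    have h := Real.cos_le_cos_of_nonneg_of_le_pi hε.le (Real.arccos_le_pi x) hA
    rwa [Real.cos_arccos hx_gt.le hx_lt.le] at h
  have hyk : (a ^ 2 + c ^ 2 - b ^ 2) / (2 * a * c) ≤ Real.cos ε := by
    have h := Real.cos_le_cos_of_nonneg_of_le_pi hε.le (Real.arccos_le_pi _) hB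
    rwa [Real.cos_arccos hy_gt.le hy_lt.le] at h
  have hzk : (a ^ 2 + b ^ 2 - c ^ 2) / (2 * a * b) ≤ Real.cos ε := by
    have h := Real.cos_le_cos_of_nonneg_of_le_pi hε.le (Real.arccos_le_pi _) hC
    rwa [Real.cos_arccos hz_gt.le hz_lt.le] at h
  have hk1 : Real.cos ε ≤ 1 := Real.cos_le_one ε
  -- multiplied-out forms
  have hxk' : b ^ 2 + c ^ 2 - a ^ 2 ≤ Real.cos ε * (2 * b * c) := by
    have h := hxk; rw [hxdef, div_le_iff₀ hbc] at h; exact h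
  have hyk' : a ^ 2 + c ^ 2 - b ^ 2 ≤ Real.cos ε * (2 * a * c) := by
    rwa [div_le_iff₀ hac] at hyk
  have hzk' : a ^ 2 + b ^ 2 - c ^ 2 ≤ Real.cos ε * (2 * a * b) := by
    rwa [div_le_iff₀ hab] at hzk
  -- each side is at most cos ε times the sum of the other two
  have hside_a : a ≤ (b + c) * Real.cos ε := by nlinarith only [hyk', hzk', ha]
  have hside_b : b ≤ (a + c) * Real.cos ε := by nlinarith only [hxk', hzk', hb]
  have hside_c : c ≤ (a + b) * Real.cos ε := by nlinarith only [hxk', hyk', hc]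
  have hk_half : (1:ℝ)/2 ≤ Real.cos ε := by
    nlinarith only [hside_a, hside_b, hside_c, ha, hb, hc]
  have hk0 : (0:ℝ) ≤ Real.cos ε := by linarith
  have hεπ3 : ε ≤ π / 3 := by
    by_contra h
    push_neg at h
    have h2 : Real.cos ε < Real.cos (π / 3) :=
      Real.cos_lt_cos_of_nonneg_of_le_pi (by positivity) hεπ h
    rw [Real.cos_pi_div_three] at h2
    linarith
  have hδ0 : (0:ℝ) ≤ δ := by nlinarith only [abs_nonneg (a' - a), hpa, ha]
  have hδε : δ ≤ ε ^ 2 / 48 := hδ.le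
  have hδ40 : δ < 1 / 40 := by
    nlinarith only [hδ, hπsq, hε,
      mul_le_mul hεπ3 hεπ3 hε.le (by positivity : (0:ℝ) ≤ π / 3)]
  -- quantitative bounds involving cos ε and sin ε
  have hG5 : 2 * ε ^ 2 ≤ (1 - Real.cos ε) * π ^ 2 := by
    have h1k : Real.cos ε ≤ 1 - 2 / π ^ 2 * ε ^ 2 :=
      Real.cos_le_one_sub_mul_cos_sq (by rw [abs_of_nonneg hε.le]; exact hεπ)
    have hπ2 : (0:ℝ) < π ^ 2 := by positivity
    have h2 := mul_le_mul_of_nonneg_right h1k hπ2.le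
    have h3 : (1 - 2 / π ^ 2 * ε ^ 2) * π ^ 2 = π ^ 2 - 2 * ε ^ 2 := by
      field_simp
    rw [h3] at h2
    nlinarith only [h2]
  have hjordan : 2 * ε ≤ Real.sin ε * π := by
    have h := Real.mul_le_sin hε.le (by linarith : ε ≤ π / 2)
    have h2 := mul_le_mul_of_nonneg_right h hpi.le
    have h3 : 2 / π * ε * π = 2 * ε := by field_simp
    rw [h3] at h2
    exact h2
  have hsin_pos : 0 < Real.sin ε := Real.sin_pos_of_pos_of_lt_pi hε (by linarith)
  have hks : Real.cos ε * ε ≤ Real.sin ε := by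
    have hcos_pos : 0 < Real.cos ε := by linarith
    have ht := Real.lt_tan hε (by linarith : ε < π / 2)
    rw [Real.tan_eq_sin_div_cos, lt_div_iff₀ hcos_pos] at ht
    nlinarith only [ht]
  have hsq : Real.sin ε ^ 2 = 1 - Real.cos ε ^ 2 := by
    linarith [Real.sin_sq_add_cos_sq ε]
  -- lower bounds on the cosines
  have ha2 : a ^ 2 ≤ ((b + c) * Real.cos ε) ^ 2 := by nlinarith only [hside_a, ha]
  have hb2 : b ^ 2 ≤ ((a + c) * Real.cos ε) ^ 2 := by nlinarith only [hside_b, hb]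
  have hc2 : c ^ 2 ≤ ((a + b) * Real.cos ε) ^ 2 := by nlinarith only [hside_c, hc]
  have hcos2 : (0:ℝ) ≤ 1 - Real.cos ε ^ 2 := by nlinarith only [hk1, hk0]
  have hx_lb : 1 - 2 * Real.cos ε ^ 2 ≤ x := by
    rw [hxdef, le_div_iff₀ hbc]
    nlinarith only [ha2, mul_nonneg (sq_nonneg (b - c)) hcos2]
  have hy_lb : 1 - 2 * Real.cos ε ^ 2 ≤ (a ^ 2 + c ^ 2 - b ^ 2) / (2 * a * c) := by
    rw [le_div_iff₀ hac]
    nlinarith only [hb2, mul_nonneg (sq_nonneg (a - c)) hcos2]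
  have hz_lb : 1 - 2 * Real.cos ε ^ 2 ≤ (a ^ 2 + b ^ 2 - c ^ 2) / (2 * a * b) := by
    rw [le_div_iff₀ hab]
    nlinarith only [hc2, mul_nonneg (sq_nonneg (a - b)) hcos2]
  -- 1 - cos ε ² is a lower bound for 1 - (each cosine)²
  have hkx0 : (0:ℝ) ≤ Real.cos ε + x := by nlinarith only [hx_lb, hk_half, hk1]
  have h1x : 1 - Real.cos ε ^ 2 ≤ 1 - x ^ 2 := by
    nlinarith only [mul_nonneg (sub_nonneg.2 hxk) hkx0]
  have hky0 : (0:ℝ) ≤ Real.cos ε + (a ^ 2 + c ^ 2 - b ^ 2) / (2 * a * c) := by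
    nlinarith only [hy_lb, hk_half, hk1]
  have h1y : 1 - Real.cos ε ^ 2 ≤ 1 - ((a ^ 2 + c ^ 2 - b ^ 2) / (2 * a * c)) ^ 2 := by
    nlinarith only [mul_nonneg (sub_nonneg.2 hyk) hky0]
  have hkz0 : (0:ℝ) ≤ Real.cos ε + (a ^ 2 + b ^ 2 - c ^ 2) / (2 * a * b) := by
    nlinarith only [hz_lb, hk_half, hk1]
  have h1z : 1 - Real.cos ε ^ 2 ≤ 1 - ((a ^ 2 + b ^ 2 - c ^ 2) / (2 * a * b)) ^ 2 := by
    nlinarith only [mul_nonneg (sub_nonneg.2 hzk) hkz0]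
  have h0x : (0:ℝ) ≤ 1 - x ^ 2 := le_trans hcos2 h1x
  -- S = sin A
  set S := Real.sqrt (1 - x ^ 2) with hSdef
  have hS0 : 0 ≤ S := Real.sqrt_nonneg _
  have hS2 : S ^ 2 = 1 - x ^ 2 := Real.sq_sqrt h0x
  have hSs : Real.sin ε ≤ S := by
    rw [hSdef, Real.le_sqrt hsin_pos.le h0x, hsq]
    exact h1x
  have hSpos : 0 < S := lt_of_lt_of_le hsin_pos hSs
  have hS1 : S ≤ 1 := by
    nlinarith only [hS2, hS0, sq_nonneg x]
  -- law of sines bounds : a·sin ε ≤ b·S and a·sin ε ≤ c·S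
  have hG1 : a * Real.sin ε ≤ c * S := by
    have hid : c ^ 2 * (1 - x ^ 2)
        = a ^ 2 * (1 - ((a ^ 2 + b ^ 2 - c ^ 2) / (2 * a * b)) ^ 2) := by
      rw [hxdef]; field_simp; ring
    have hsq1 : (a * Real.sin ε) ^ 2 ≤ (c * S) ^ 2 := by
      have e1 : (c * S) ^ 2 = c ^ 2 * (1 - x ^ 2) := by rw [mul_pow, hS2]
      have e2 : (a * Real.sin ε) ^ 2 = a ^ 2 * (1 - Real.cos ε ^ 2) := by
        rw [mul_pow, hsq]
      rw [e1, e2, hid]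
      exact mul_le_mul_of_nonneg_left h1z (sq_nonneg a)
    have h := Real.sqrt_le_sqrt hsq1
    rwa [Real.sqrt_sq (by positivity), Real.sqrt_sq (by positivity)] at h
  have hG2 : a * Real.sin ε ≤ b * S := by
    have hid : b ^ 2 * (1 - x ^ 2)
        = a ^ 2 * (1 - ((a ^ 2 + c ^ 2 - b ^ 2) / (2 * a * c)) ^ 2) := by
      rw [hxdef]; field_simp; ring
    have hsq1 : (a * Real.sin ε) ^ 2 ≤ (b * S) ^ 2 := by
      have e1 : (b * S) ^ 2 = b ^ 2 * (1 - x ^ 2) := by rw [mul_pow, hS2]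
      have e2 : (a * Real.sin ε) ^ 2 = a ^ 2 * (1 - Real.cos ε ^ 2) := by
        rw [mul_pow, hsq]
      rw [e1, e2, hid]
      exact mul_le_mul_of_nonneg_left h1y (sq_nonneg a)
    have h := Real.sqrt_le_sqrt hsq1
    rwa [Real.sqrt_sq (by positivity), Real.sqrt_sq (by positivity)] at h
  -- relative perturbations
  set α := (a' - a) / a with hαdef
  set β := (b' - b) / b with hβdef
  set γ := (c' - c) / c with hγdef
  have hα : |α| ≤ δ := by
    rw [hαdef, abs_div, abs_of_pos ha, div_le_iff₀ ha]
    exact hpa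
  have hβ : |β| ≤ δ := by
    rw [hβdef, abs_div, abs_of_pos hb, div_le_iff₀ hb]
    exact hpb
  have hγ : |γ| ≤ δ := by
    rw [hγdef, abs_div, abs_of_pos hc, div_le_iff₀ hc]
    exact hpc
  have ha'e : a' = a * (1 + α) := by rw [hαdef]; field_simp; ring
  have hb'e : b' = b * (1 + β) := by rw [hβdef]; field_simp; ring
  have hc'e : c' = c * (1 + γ) := by rw [hγdef]; field_simp; ring
  obtain ⟨hα1, hα2⟩ := abs_le.mp hα
  obtain ⟨hβ1, hβ2⟩ := abs_le.mp hβ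
  obtain ⟨hγ1, hγ2⟩ := abs_le.mp hγ
  -- the perturbed sides still form a triangle
  have hkδ : (1 + δ) * Real.cos ε < 1 - δ := by
    nlinarith only [hG5, hδ, hδ0, hk1, hπsq, hε, hpi, sq_nonneg ε,
      mul_nonneg hδ0 (sq_nonneg ε), mul_pos hpi hpi]
  have hsum_bc : (0:ℝ) < b + c := by linarith
  have hsum_ac : (0:ℝ) < a + c := by linarith
  have hsum_ab : (0:ℝ) < a + b := by linarith
  have htri1' : a' < b' + c' := by
    have s1 : a * (1 + α) ≤ a * (1 + δ) := by nlinarith only [hα2, ha]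
    have s2 : a * (1 + δ) ≤ (b + c) * Real.cos ε * (1 + δ) :=
      mul_le_mul_of_nonneg_right hside_a (by linarith)
    have s3 : (b + c) * ((1 + δ) * Real.cos ε) < (b + c) * (1 - δ) :=
      mul_lt_mul_of_pos_left hkδ hsum_bc
    have s4 : (b + c) * (1 - δ) ≤ b * (1 + β) + c * (1 + γ) := by
      nlinarith only [hβ1, hγ1, hb, hc]
    rw [ha'e, hb'e, hc'e]
    nlinarith only [s1, s2, s3, s4]
  have htri2' : b' < a' + c' := by
    have s1 : b * (1 + β) ≤ b * (1 + δ) := by nlinarith only [hβ2, hb]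
    have s2 : b * (1 + δ) ≤ (a + c) * Real.cos ε * (1 + δ) :=
      mul_le_mul_of_nonneg_right hside_b (by linarith)
    have s3 : (a + c) * ((1 + δ) * Real.cos ε) < (a + c) * (1 - δ) :=
      mul_lt_mul_of_pos_left hkδ hsum_ac
    have s4 : (a + c) * (1 - δ) ≤ a * (1 + α) + c * (1 + γ) := by
      nlinarith only [hα1, hγ1, ha, hc]
    rw [ha'e, hb'e, hc'e]
    nlinarith only [s1, s2, s3, s4]
  have htri3' : c' < a' + b' := by
    have s1 : c * (1 + γ) ≤ c * (1 + δ) := by nlinarith only [hγ2, hc]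
    have s2 : c * (1 + δ) ≤ (a + b) * Real.cos ε * (1 + δ) :=
      mul_le_mul_of_nonneg_right hside_c (by linarith)
    have s3 : (a + b) * ((1 + δ) * Real.cos ε) < (a + b) * (1 - δ) :=
      mul_lt_mul_of_pos_left hkδ hsum_ab
    have s4 : (a + b) * (1 - δ) ≤ a * (1 + α) + b * (1 + β) := by
      nlinarith only [hα1, hβ1, ha, hb]
    rw [ha'e, hb'e, hc'e]
    nlinarith only [s1, s2, s3, s4]
  have hx'_lt : x' < 1 := by
    rw [hx'def, div_lt_one hbc']
    nlinarith only [mul_pos (show (0:ℝ) < a' - b' + c' by linarith)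
      (show (0:ℝ) < a' + b' - c' by linarith)]
  have hx'_gt : (-1:ℝ) < x' := by
    rw [hx'def, lt_div_iff₀ hbc']
    nlinarith only [mul_pos (show (0:ℝ) < b' + c' - a' by linarith)
      (show (0:ℝ) < a' + b' + c' by linarith)]
  -- decomposition of the cosine difference
  have h1β : (0:ℝ) < 1 + β := by linarith
  have h1γ : (0:ℝ) < 1 + γ := by linarith
  have hden : (0:ℝ) < 2 * b * c * ((1 + β) * (1 + γ)) :=
    mul_pos hbc (mul_pos h1β h1γ)
  have hdiff : x' - x = ((a ^ 2 + b ^ 2 - c ^ 2) * (β - α) + (a ^ 2 + c ^ 2 - b ^ 2) * (γ - α)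
      + (b ^ 2 * (β * (β - γ)) + c ^ 2 * (γ * (γ - β)) - a ^ 2 * (α * α - β * γ)))
      / (2 * b * c * ((1 + β) * (1 + γ))) := by
    rw [hx'def, hxdef, ha'e, hb'e, hc'e]
    rw [div_sub_div _ _ (by positivity) hbc.ne', div_eq_div_iff (by positivity) hden.ne']
    ring
  -- bounding the numerator
  have habs_q : |a ^ 2 + b ^ 2 - c ^ 2| ≤ 2 * a * b * Real.cos ε := by
    have heq : a ^ 2 + b ^ 2 - c ^ 2
        = 2 * a * b * ((a ^ 2 + b ^ 2 - c ^ 2) / (2 * a * b)) := by field_simp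
    rw [heq, abs_mul, abs_of_pos hab]
    have habsz : |(a ^ 2 + b ^ 2 - c ^ 2) / (2 * a * b)| ≤ Real.cos ε :=
      abs_le.2 ⟨by nlinarith only [hz_lb, hk_half, hk1], hzk⟩
    exact mul_le_mul_of_nonneg_left habsz hab.le
  have habs_p : |a ^ 2 + c ^ 2 - b ^ 2| ≤ 2 * a * c * Real.cos ε := by
    have heq : a ^ 2 + c ^ 2 - b ^ 2
        = 2 * a * c * ((a ^ 2 + c ^ 2 - b ^ 2) / (2 * a * c)) := by field_simp
    rw [heq, abs_mul, abs_of_pos hac]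
    have habsy : |(a ^ 2 + c ^ 2 - b ^ 2) / (2 * a * c)| ≤ Real.cos ε :=
      abs_le.2 ⟨by nlinarith only [hy_lb, hk_half, hk1], hyk⟩
    exact mul_le_mul_of_nonneg_left habsy hac.le
  have hβα : |β - α| ≤ 2 * δ := le_trans (abs_sub β α) (by linarith)
  have hγα : |γ - α| ≤ 2 * δ := le_trans (abs_sub γ α) (by linarith)
  have hβγ : |β - γ| ≤ 2 * δ := le_trans (abs_sub β γ) (by linarith)
  have hγβ : |γ - β| ≤ 2 * δ := le_trans (abs_sub γ β) (by linarith)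
  have t1 : |(a ^ 2 + b ^ 2 - c ^ 2) * (β - α)| ≤ 2 * a * b * Real.cos ε * (2 * δ) :=
    pta_abs_mul_le habs_q hβα
  have t2 : |(a ^ 2 + c ^ 2 - b ^ 2) * (γ - α)| ≤ 2 * a * c * Real.cos ε * (2 * δ) :=
    pta_abs_mul_le habs_p hγα
  have t3 : |b ^ 2 * (β * (β - γ))| ≤ b ^ 2 * (δ * (2 * δ)) :=
    pta_abs_mul_le (le_of_eq (abs_of_nonneg (sq_nonneg b))) (pta_abs_mul_le hβ hβγ)
  have t4 : |c ^ 2 * (γ * (γ - β))| ≤ c ^ 2 * (δ * (2 * δ)) :=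
    pta_abs_mul_le (le_of_eq (abs_of_nonneg (sq_nonneg c))) (pta_abs_mul_le hγ hγβ)
  have t5 : |a ^ 2 * (α * α - β * γ)| ≤ a ^ 2 * (2 * δ ^ 2) := by
    apply pta_abs_mul_le (le_of_eq (abs_of_nonneg (sq_nonneg a)))
    calc |α * α - β * γ| ≤ |α * α| + |β * γ| := abs_sub _ _
      _ ≤ δ * δ + δ * δ := add_le_add (pta_abs_mul_le hα hα) (pta_abs_mul_le hβ hγ)
      _ = 2 * δ ^ 2 := by ring
  have hNb : |(a ^ 2 + b ^ 2 - c ^ 2) * (β - α) + (a ^ 2 + c ^ 2 - b ^ 2) * (γ - α)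
      + (b ^ 2 * (β * (β - γ)) + c ^ 2 * (γ * (γ - β)) - a ^ 2 * (α * α - β * γ))|
      ≤ 2 * a * b * Real.cos ε * (2 * δ) + 2 * a * c * Real.cos ε * (2 * δ)
        + (b ^ 2 * (δ * (2 * δ)) + c ^ 2 * (δ * (2 * δ)) + a ^ 2 * (2 * δ ^ 2)) := by
    have u1 := abs_add_le ((a ^ 2 + b ^ 2 - c ^ 2) * (β - α)) ((a ^ 2 + c ^ 2 - b ^ 2) * (γ - α))
    have u2 := abs_add_le ((a ^ 2 + b ^ 2 - c ^ 2) * (β - α) + (a ^ 2 + c ^ 2 - b ^ 2) * (γ - α))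
      (b ^ 2 * (β * (β - γ)) + c ^ 2 * (γ * (γ - β)) - a ^ 2 * (α * α - β * γ))
    have u3 := abs_sub (b ^ 2 * (β * (β - γ)) + c ^ 2 * (γ * (γ - β))) (a ^ 2 * (α * α - β * γ))
    have u4 := abs_add_le (b ^ 2 * (β * (β - γ))) (c ^ 2 * (γ * (γ - β)))
    linarith only [t1, t2, t3, t4, t5, u1, u2, u3, u4]
  have hden_lb : 2 * b * c * (1 - δ) ^ 2 ≤ 2 * b * c * ((1 + β) * (1 + γ)) := by
    nlinarith only [mul_pos hb hc,
      mul_le_mul (show 1 - δ ≤ 1 + β by linarith) (show 1 - δ ≤ 1 + γ by linarith)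
        (by linarith : (0:ℝ) ≤ 1 - δ) (by linarith : (0:ℝ) ≤ 1 + β)]
  have hden_lb_pos : (0:ℝ) < 2 * b * c * (1 - δ) ^ 2 :=
    mul_pos hbc (pow_pos (by linarith) 2)
  have hE : |x' - x| ≤ (2 * a * b * Real.cos ε * (2 * δ) + 2 * a * c * Real.cos ε * (2 * δ)
      + (b ^ 2 * (δ * (2 * δ)) + c ^ 2 * (δ * (2 * δ)) + a ^ 2 * (2 * δ ^ 2)))
      / (2 * b * c * (1 - δ) ^ 2) := by
    rw [hdiff, abs_div, abs_of_pos hden]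
    exact div_le_div₀ (by positivity) hNb hden_lb_pos hden_lb
  -- the quantitative arccos estimate
  have hL := pta_arccos_diff hx_gt.le hx_lt.le hx'_gt.le hx'_lt.le
  rw [← hSdef] at hL
  -- assembling the final bound
  have hsumsq0 : (0:ℝ) ≤ a ^ 2 + b ^ 2 + c ^ 2 := by positivity
  have hbc2 : (b ^ 2 + c ^ 2) * (1 - Real.cos ε) ≤ 2 * b * c * Real.cos ε := by
    nlinarith only [hxk', ha2, hk0, hk1, mul_pos hb hc,
      (show (0:ℝ) < 1 + Real.cos ε by linarith)]
  have ha2' : a ^ 2 ≤ (b + c) ^ 2 := by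
    nlinarith only [ha2, hcos2, sq_nonneg (b + c)]
  have hak : a ^ 2 * (1 - Real.cos ε) ≤ (b + c) ^ 2 * (1 - Real.cos ε) :=
    mul_le_mul_of_nonneg_right ha2' (by linarith)
  have hG4 : (a ^ 2 + b ^ 2 + c ^ 2) * (1 - Real.cos ε) ≤ 4 * (b * c) := by
    nlinarith only [hak, hbc2, hk1, mul_pos hb hc]
  have ht3 : (a ^ 2 + b ^ 2 + c ^ 2) * ε ^ 2 ≤ 2 * π ^ 2 * (b * c) := by
    nlinarith only [mul_le_mul_of_nonneg_left hG5 hsumsq0,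
      mul_le_mul_of_nonneg_right hG4 (sq_nonneg π)]
  have hδsq : δ ^ 2 ≤ δ * (ε ^ 2 / 48) := by nlinarith only [hδε, hδ0]
  have w1 : a * b * (Real.cos ε * ε) ≤ b * c * S := by
    nlinarith only [mul_le_mul_of_nonneg_left hks (by positivity : (0:ℝ) ≤ a * b),
      mul_le_mul_of_nonneg_left hG1 hb.le]
  have w2 : a * c * (Real.cos ε * ε) ≤ b * c * S := by
    nlinarith only [mul_le_mul_of_nonneg_left hks (by positivity : (0:ℝ) ≤ a * c),
      mul_le_mul_of_nonneg_left hG2 hc.le]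
  have u1 : π * ε * (2 * a * b * Real.cos ε * (2 * δ)) ≤ 4 * π * δ * (b * c * S) := by
    have h := mul_le_mul_of_nonneg_left w1 (by positivity : (0:ℝ) ≤ 4 * π * δ)
    nlinarith only [h]
  have u2 : π * ε * (2 * a * c * Real.cos ε * (2 * δ)) ≤ 4 * π * δ * (b * c * S) := by
    have h := mul_le_mul_of_nonneg_left w2 (by positivity : (0:ℝ) ≤ 4 * π * δ)
    nlinarith only [h]
  have u3 : π * ε * (b ^ 2 * (δ * (2 * δ)) + c ^ 2 * (δ * (2 * δ)) + a ^ 2 * (2 * δ ^ 2))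
      ≤ π ^ 3 / 12 * (δ * ε * (b * c)) := by
    have m1 : π * ε * (b ^ 2 * (δ * (2 * δ)) + c ^ 2 * (δ * (2 * δ)) + a ^ 2 * (2 * δ ^ 2))
        = 2 * π * ε * (a ^ 2 + b ^ 2 + c ^ 2) * δ ^ 2 := by ring
    have m2 : 2 * π * ε * (a ^ 2 + b ^ 2 + c ^ 2) * δ ^ 2
        ≤ 2 * π * ε * (a ^ 2 + b ^ 2 + c ^ 2) * (δ * (ε ^ 2 / 48)) := by
      have hcoef : (0:ℝ) ≤ 2 * π * ε * (a ^ 2 + b ^ 2 + c ^ 2) := by positivity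
      exact mul_le_mul_of_nonneg_left hδsq hcoef
    have m3 : 2 * π * ε * (a ^ 2 + b ^ 2 + c ^ 2) * (δ * (ε ^ 2 / 48))
        = π * δ * ε / 24 * ((a ^ 2 + b ^ 2 + c ^ 2) * ε ^ 2) := by ring
    have m4 : π * δ * ε / 24 * ((a ^ 2 + b ^ 2 + c ^ 2) * ε ^ 2)
        ≤ π * δ * ε / 24 * (2 * π ^ 2 * (b * c)) :=
      mul_le_mul_of_nonneg_left ht3 (by positivity)
    have m5 : π * δ * ε / 24 * (2 * π ^ 2 * (b * c)) = π ^ 3 / 12 * (δ * ε * (b * c)) := by ring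
    linarith only [m1, m2, m3, m4, m5]
  have hεS : ε ≤ 1.5708 * S := by
    nlinarith only [hjordan, hπu, hS0, mul_le_mul_of_nonneg_right hSs hpi.le]
  have hπ3 : π ^ 3 ≤ 31.1 := by nlinarith only [hπu, hπl, hπsq, hpi]
  have h1δsq : ((39:ℝ)/40) ^ 2 ≤ (1 - δ) ^ 2 := by nlinarith only [hδ40, hδ0]
  have final_scalar : 8 * π * S + π ^ 3 / 12 * ε ≤ 48 * (1 - δ) ^ 2 * S := by
    have p1 : π * S ≤ 3.1416 * S := mul_le_mul_of_nonneg_right hπu.le hS0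
    have p2 : π ^ 3 * ε ≤ 31.1 * ε := mul_le_mul_of_nonneg_right hπ3 hε.le
    have p3 : ((39:ℝ)/40) ^ 2 * S ≤ (1 - δ) ^ 2 * S := mul_le_mul_of_nonneg_right h1δsq hS0
    nlinarith only [p1, p2, p3, hεS, hS0, hε]
  have Key : π * ε * (2 * a * b * Real.cos ε * (2 * δ) + 2 * a * c * Real.cos ε * (2 * δ)
      + (b ^ 2 * (δ * (2 * δ)) + c ^ 2 * (δ * (2 * δ)) + a ^ 2 * (2 * δ ^ 2)))
      ≤ 48 * δ * ((1 - δ) ^ 2 * (b * c * S)) := by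
    have q := mul_le_mul_of_nonneg_left final_scalar
      (mul_nonneg hδ0 (by positivity : (0:ℝ) ≤ b * c))
    nlinarith only [u1, u2, u3, q]
  -- conclusion
  have hE' : |x' - x| * (2 * b * c * (1 - δ) ^ 2)
      ≤ 2 * a * b * Real.cos ε * (2 * δ) + 2 * a * c * Real.cos ε * (2 * δ)
        + (b ^ 2 * (δ * (2 * δ)) + c ^ 2 * (δ * (2 * δ)) + a ^ 2 * (2 * δ ^ 2)) :=
    (le_div_iff₀ hden_lb_pos).mp hE
  have c1 := mul_le_mul_of_nonneg_right hL
    (by positivity : (0:ℝ) ≤ ε * (2 * b * c * (1 - δ) ^ 2))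
  have c2 := mul_le_mul_of_nonneg_right hE' (by positivity : (0:ℝ) ≤ π * ε)
  have hfin : |Real.arccos x' - Real.arccos x| * ε * (S * (2 * b * c * (1 - δ) ^ 2))
      ≤ 24 * δ * (S * (2 * b * c * (1 - δ) ^ 2)) := by
    nlinarith only [c1, c2, Key]
  have hSD : (0:ℝ) < S * (2 * b * c * (1 - δ) ^ 2) := mul_pos hSpos hden_lb_pos
  have hfin2 : |Real.arccos x' - Real.arccos x| * ε ≤ 24 * δ := by
    have := (mul_le_mul_iff_of_pos_right hSD).mp hfin
    linarith only [this]
  rw [show 24 / ε * δ = 24 * δ / ε by ring, le_div_iff₀ hε]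
  exact hfin2
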